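/- Let (X,S) be a non-degenerate symmetric solution satisfying Property (C), and let xy be a frozen word. Then for every z ∈ X there exists a unique frozen pair (x′,y′) with xyz = z x′ y′ in the structure monoid M(X,S). -/

import Mathlib

/-- The defining relations of the structure monoid: `x y = g_x(y) f_y(x)`. -/
def structRel {X : Type*} (g f : X → X → X) :
    FreeMonoid X → FreeMonoid X → Prop :=
  fun a b => ∃ x y : X, a = FreeMonoid.of x * FreeMonoid.of y ∧
    b = FreeMonoid.of (g x y) * FreeMonoid.of (f y x)

/-- `S` acting on the first two components of `X³`. -/
def S12 {X : Type*} (S : X × X → X × X) : X × X × X → X × X × X :=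
  fun p => ((S (p.1, p.2.1)).1, (S (p.1, p.2.1)).2, p.2.2)

/-- `S` acting on the last two components of `X³`. -/
def S23 {X : Type*} (S : X × X → X × X) : X × X × X → X × X × X :=
  fun p => (p.1, (S (p.2.1, p.2.2)).1, (S (p.2.1, p.2.2)).2)

/-- The braid relation `S¹²S²³S¹² = S²³S¹²S²³`. -/
def Braided {X : Type*} (S : X × X → X × X) : Prop :=
  S12 S ∘ S23 S ∘ S12 S = S23 S ∘ S12 S ∘ S23 S

/-- Property (C): for every frozen pair `(x,y)` (i.e. `S(x,y) = (x,y)`), one has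
`g_x ∘ g_y = id` and `f_y ∘ f_x = id`. -/
def PropertyC {X : Type*} (S : X × X → X × X) (g f : X → X → X) : Prop :=
  ∀ x y : X, S (x, y) = (x, y) →
    (∀ z : X, g x (g y z) = z) ∧ (∀ z : X, f y (f x z) = z)

namespace Stmt14Aux

variable {X : Type*}

/-- One-step rewrite in context. -/
def step (g f : X → X → X) : FreeMonoid X → FreeMonoid X → Prop :=
  fun u v => ∃ (l r : FreeMonoid X) (x y : X),
    u = l * (FreeMonoid.of x * FreeMonoid.of y) * r ∧
    v = l * (FreeMonoid.of (g x y) * FreeMonoid.of (f y x)) * r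

lemma step_mul_left {g f : X → X → X} {u v : FreeMonoid X} (w : FreeMonoid X)
    (h : step g f u v) : step g f (w * u) (w * v) := by
  obtain ⟨l, r, x, y, hu, hv⟩ := h
  exact ⟨w * l, r, x, y, by rw [hu]; simp [mul_assoc], by rw [hv]; simp [mul_assoc]⟩

lemma step_mul_right {g f : X → X → X} {u v : FreeMonoid X} (w : FreeMonoid X)
    (h : step g f u v) : step g f (u * w) (v * w) := by
  obtain ⟨l, r, x, y, hu, hv⟩ := h
  exact ⟨l, r * w, x, y, by rw [hu]; simp [mul_assoc], by rw [hv]; simp [mul_assoc]⟩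

lemma eqv_mul_left {g f : X → X → X} {u v : FreeMonoid X} (w : FreeMonoid X)
    (h : Relation.EqvGen (step g f) u v) : Relation.EqvGen (step g f) (w * u) (w * v) := by
  induction h with
  | rel a b h => exact Relation.EqvGen.rel _ _ (step_mul_left w h)
  | refl a => exact Relation.EqvGen.refl _
  | symm a b _ ih => exact Relation.EqvGen.symm _ _ ih
  | trans a b c _ _ ih1 ih2 => exact Relation.EqvGen.trans _ _ _ ih1 ih2

lemma eqv_mul_right {g f : X → X → X} {u v : FreeMonoid X} (w : FreeMonoid X)
    (h : Relation.EqvGen (step g f) u v) : Relation.EqvGen (step g f) (u * w) (v * w) := by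
  induction h with
  | rel a b h => exact Relation.EqvGen.rel _ _ (step_mul_right w h)
  | refl a => exact Relation.EqvGen.refl _
  | symm a b _ ih => exact Relation.EqvGen.symm _ _ ih
  | trans a b c _ _ ih1 ih2 => exact Relation.EqvGen.trans _ _ _ ih1 ih2

/-- The congruence generated by the rewriting steps. -/
def myCon (g f : X → X → X) : Con (FreeMonoid X) where
  r := Relation.EqvGen (step g f)
  iseqv := Relation.EqvGen.is_equivalence _
  mul' := fun {a b c d} h1 h2 =>
    Relation.EqvGen.trans _ _ _ (eqv_mul_right c h1) (eqv_mul_left b h2)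

lemma conGen_le_myCon (g f : X → X → X) :
    conGen (structRel g f) ≤ myCon g f := by
  apply Con.conGen_le.mpr
  rintro u v ⟨x, y, hu, hv⟩
  exact Relation.EqvGen.rel _ _ ⟨1, 1, x, y, by simp [hu], by simp [hv]⟩

/-- encoding of a triple as a word -/
def enc (t : X × X × X) : FreeMonoid X := FreeMonoid.ofList [t.1, t.2.1, t.2.2]

lemma enc_inj {t t' : X × X × X} (h : enc t = enc t') : t = t' := by
  have := congrArg FreeMonoid.toList h
  simp only [enc, FreeMonoid.toList_ofList, List.cons.injEq] at this
  obtain ⟨h1, h2, h3, -⟩ := this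
  exact Prod.ext h1 (Prod.ext h2 h3)

/-- one-step orbit relation on triples -/
def orel (S : X × X → X × X) : X × X × X → X × X × X → Prop :=
  fun p q => q = S12 S p ∨ q = S23 S p

section Analysis

variable {S : X × X → X × X} {g f : X → X → X}
  (hS : ∀ x y : X, S (x, y) = (g x y, f y x))

include hS

lemma step_enc_fwd {u v : FreeMonoid X} (h : step g f u v) (t : X × X × X)
    (hu : u = enc t) : ∃ t', v = enc t' ∧ orel S t t' := by
  obtain ⟨l, r, x, y, hul, hvl⟩ := h
  have hlist : l.toList ++ ([x] ++ [y]) ++ r.toList = [t.1, t.2.1, t.2.2] := by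
    have := congrArg FreeMonoid.toList (hul.symm.trans hu)
    simpa [FreeMonoid.toList_mul, enc] using this
  rcases hl : l.toList with _ | ⟨a, _ | ⟨a', l''⟩⟩
  · rw [hl] at hlist
    simp only [List.nil_append, List.cons_append, List.cons.injEq, List.nil_append] at hlist
    obtain ⟨hx, hy, hr⟩ := hlist
    refine ⟨S12 S t, ?_, Or.inl rfl⟩
    have hv' : v.toList = [g x y, f y x] ++ r.toList := by
      have := congrArg FreeMonoid.toList hvl
      simpa [FreeMonoid.toList_mul, hl] using this
    apply FreeMonoid.toList.injective
    rw [hv']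
    simp [enc, S12, hS, hr, ← hx, ← hy]
  · rw [hl] at hlist
    simp only [List.cons_append, List.nil_append, List.cons.injEq] at hlist
    obtain ⟨ha, hx, hy, hr⟩ := hlist
    have hr' : r.toList = [] := by
      cases hr' : r.toList with
      | nil => rfl
      | cons c cs => rw [hr'] at hr; simp at hr
    refine ⟨S23 S t, ?_, Or.inr rfl⟩
    have hv' : v.toList = [a] ++ [g x y, f y x] ++ r.toList := by
      have := congrArg FreeMonoid.toList hvl
      simpa [FreeMonoid.toList_mul, hl] using this
    apply FreeMonoid.toList.injective
    rw [hv', hr']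
    simp [enc, S23, hS, ← ha, ← hx, ← hy]
  · rw [hl] at hlist
    exfalso
    have := congrArg List.length hlist
    simp at this
    omega

lemma step_enc_bwd {u v : FreeMonoid X} (h : step g f u v) (t : X × X × X)
    (hv : v = enc t) : ∃ t', u = enc t' ∧ orel S t' t := by
  obtain ⟨l, r, x, y, hul, hvl⟩ := h
  have hlist : l.toList ++ ([g x y] ++ [f y x]) ++ r.toList = [t.1, t.2.1, t.2.2] := by
    have := congrArg FreeMonoid.toList (hvl.symm.trans hv)
    simpa [FreeMonoid.toList_mul, enc] using this
  rcases hl : l.toList with _ | ⟨a, _ | ⟨a', l''⟩⟩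
  · rw [hl] at hlist
    simp only [List.nil_append, List.cons_append, List.cons.injEq, List.nil_append] at hlist
    obtain ⟨hx, hy, hr⟩ := hlist
    refine ⟨(x, y, t.2.2), ?_, Or.inl ?_⟩
    · have hu' : u.toList = [x, y] ++ r.toList := by
        have := congrArg FreeMonoid.toList hul
        simpa [FreeMonoid.toList_mul, hl] using this
      apply FreeMonoid.toList.injective
      rw [hu']
      simp [enc, hr]
    · have : S12 S (x, y, t.2.2) = (g x y, f y x, t.2.2) := by simp [S12, hS]
      rw [this]
      exact Prod.ext hx.symm (Prod.ext hy.symm rfl)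
  · rw [hl] at hlist
    simp only [List.cons_append, List.nil_append, List.cons.injEq] at hlist
    obtain ⟨ha, hx, hy, hr⟩ := hlist
    have hr' : r.toList = [] := by
      cases hr' : r.toList with
      | nil => rfl
      | cons c cs => rw [hr'] at hr; simp at hr
    refine ⟨(a, x, y), ?_, Or.inr ?_⟩
    · have hu' : u.toList = [a] ++ [x, y] ++ r.toList := by
        have := congrArg FreeMonoid.toList hul
        simpa [FreeMonoid.toList_mul, hl] using this
      apply FreeMonoid.toList.injective
      rw [hu', hr']
      simp [enc]
    · have : S23 S (a, x, y) = (a, g x y, f y x) := by simp [S23, hS]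
      rw [this]
      exact Prod.ext ha.symm (Prod.ext hx.symm hy.symm)
  · rw [hl] at hlist
    exfalso
    have := congrArg List.length hlist
    simp at this
    omega

lemma eqv_enc {u v : FreeMonoid X} (h : Relation.EqvGen (step g f) u v) :
    (∀ t, u = enc t → ∃ t', v = enc t' ∧ Relation.EqvGen (orel S) t t') ∧
    (∀ t, v = enc t → ∃ t', u = enc t' ∧ Relation.EqvGen (orel S) t t') := by
  induction h with
  | rel a b h =>
    constructor
    · intro t ht
      obtain ⟨t', h1, h2⟩ := step_enc_fwd hS h t ht
      exact ⟨t', h1, Relation.EqvGen.rel _ _ h2⟩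
    · intro t ht
      obtain ⟨t', h1, h2⟩ := step_enc_bwd hS h t ht
      exact ⟨t', h1, Relation.EqvGen.symm _ _ (Relation.EqvGen.rel _ _ h2)⟩
  | refl a => exact ⟨fun t ht => ⟨t, ht, Relation.EqvGen.refl _⟩, fun t ht => ⟨t, ht, Relation.EqvGen.refl _⟩⟩
  | symm a b _ ih => exact ⟨ih.2, ih.1⟩
  | trans a b c _ _ ih1 ih2 =>
    constructor
    · intro t ht
      obtain ⟨t1, h1, h2⟩ := ih1.1 t ht
      obtain ⟨t2, h3, h4⟩ := ih2.1 t1 h1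
      exact ⟨t2, h3, Relation.EqvGen.trans _ _ _ h2 h4⟩
    · intro t ht
      obtain ⟨t1, h1, h2⟩ := ih2.2 t ht
      obtain ⟨t2, h3, h4⟩ := ih1.2 t1 h1
      exact ⟨t2, h3, Relation.EqvGen.trans _ _ _ h2 h4⟩

end Analysis

section Orbit

variable {S : X × X → X × X}

lemma s_invol (hinv : ∀ p : X × X, S (S p) = p) (p : X × X × X) : S12 S (S12 S p) = p := by
  obtain ⟨a, b, c⟩ := p
  simp only [S12]
  have := hinv (a, b)
  rw [show ((S (a,b)).1, (S (a,b)).2) = S (a, b) from rfl, this]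

lemma t_invol (hinv : ∀ p : X × X, S (S p) = p) (p : X × X × X) : S23 S (S23 S p) = p := by
  obtain ⟨a, b, c⟩ := p
  simp only [S23]
  have := hinv (b, c)
  rw [show ((S (b,c)).1, (S (b,c)).2) = S (b, c) from rfl, this]

lemma braid_pt (hbr : Braided S) (p : X × X × X) : S12 S (S23 S (S12 S p)) = S23 S (S12 S (S23 S p)) :=
  congrFun hbr p

/-- the (at most 6 element) orbit -/
def inA (S : X × X → X × X) (w q : X × X × X) : Prop :=
  q = w ∨ q = S12 S w ∨ q = S23 S w ∨ q = S12 S (S23 S w) ∨ q = S23 S (S12 S w) ∨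
    q = S12 S (S23 S (S12 S w))

lemma inA_closure_s (hinv : ∀ p : X × X, S (S p) = p) (hbr : Braided S) {w q : X × X × X} (h : inA S w q) : inA S w (S12 S q) := by
  rcases h with h | h | h | h | h | h <;> subst h
  · exact Or.inr (Or.inl rfl)
  · exact Or.inl (s_invol hinv w)
  · exact Or.inr (Or.inr (Or.inr (Or.inl rfl)))
  · exact Or.inr (Or.inr (Or.inl (s_invol hinv _)))
  · exact Or.inr (Or.inr (Or.inr (Or.inr (Or.inr rfl))))
  · exact Or.inr (Or.inr (Or.inr (Or.inr (Or.inl (s_invol hinv _)))))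

lemma inA_closure_t (hinv : ∀ p : X × X, S (S p) = p) (hbr : Braided S) {w q : X × X × X} (h : inA S w q) : inA S w (S23 S q) := by
  rcases h with h | h | h | h | h | h <;> subst h
  · exact Or.inr (Or.inr (Or.inl rfl))
  · exact Or.inr (Or.inr (Or.inr (Or.inr (Or.inl rfl))))
  · exact Or.inl (t_invol hinv w)
  · exact Or.inr (Or.inr (Or.inr (Or.inr (Or.inr (braid_pt hbr w).symm))))
  · exact Or.inr (Or.inl (t_invol hinv _))
  · rw [braid_pt hbr w, t_invol hinv]
    exact Or.inr (Or.inr (Or.inr (Or.inl rfl)))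

lemma inA_refl (w : X × X × X) : inA S w w := Or.inl rfl

lemma inA_symm (hinv : ∀ p : X × X, S (S p) = p) (hbr : Braided S) {w q : X × X × X} (h : inA S w q) : inA S q w := by
  rcases h with h | h | h | h | h | h <;> subst h
  · exact inA_refl _
  · have := inA_closure_s hinv hbr (inA_refl (S := S) (S12 S w))
    rwa [s_invol hinv] at this
  · have := inA_closure_t hinv hbr (inA_refl (S := S) (S23 S w))
    rwa [t_invol hinv] at this
  · have h1 := inA_closure_s hinv hbr (inA_refl (S := S) (S12 S (S23 S w)))
    rw [s_invol hinv] at h1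
    have h2 := inA_closure_t hinv hbr h1
    rwa [t_invol hinv] at h2
  · have h1 := inA_closure_t hinv hbr (inA_refl (S := S) (S23 S (S12 S w)))
    rw [t_invol hinv] at h1
    have h2 := inA_closure_s hinv hbr h1
    rwa [s_invol hinv] at h2
  · have h1 := inA_closure_s hinv hbr (inA_refl (S := S) (S12 S (S23 S (S12 S w))))
    rw [s_invol hinv] at h1
    have h2 := inA_closure_t hinv hbr h1
    rw [t_invol hinv] at h2
    have h3 := inA_closure_s hinv hbr h2
    rwa [s_invol hinv] at h3

lemma inA_trans (hinv : ∀ p : X × X, S (S p) = p) (hbr : Braided S) {w q r : X × X × X} (h1 : inA S w q) (h2 : inA S q r) : inA S w r := by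
  rcases h2 with h | h | h | h | h | h <;> subst h
  · exact h1
  · exact inA_closure_s hinv hbr h1
  · exact inA_closure_t hinv hbr h1
  · exact inA_closure_s hinv hbr (inA_closure_t hinv hbr h1)
  · exact inA_closure_t hinv hbr (inA_closure_s hinv hbr h1)
  · exact inA_closure_s hinv hbr (inA_closure_t hinv hbr (inA_closure_s hinv hbr h1))

lemma orbit_inA (hinv : ∀ p : X × X, S (S p) = p) (hbr : Braided S) {w q : X × X × X} (h : Relation.EqvGen (orel S) w q) : inA S w q := by
  induction h with
  | rel a b h =>
    rcases h with h | h <;> subst h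
    · exact Or.inr (Or.inl rfl)
    · exact Or.inr (Or.inr (Or.inl rfl))
  | refl a => exact inA_refl _
  | symm a b _ ih => exact inA_symm hinv hbr ih
  | trans a b c _ _ ih1 ih2 => exact inA_trans hinv hbr ih1 ih2

end Orbit

section Central

lemma central {S : X × X → X × X} {g f : X → X → X}
    (hS : ∀ x y : X, S (x, y) = (g x y, f y x))
    (hf : ∀ x : X, Function.Bijective (f x))
    (hinv : ∀ p : X × X, S (S p) = p)
    (hC : PropertyC S g f) {z a b : X} (hab : S (a, b) = (a, b))
    (h1 : (S12 S ((z, a, b) : X × X × X)).1 = z)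
    (h2 : S23 S (S12 S ((z, a, b) : X × X × X)) = S12 S ((z, a, b) : X × X × X)) :
    S12 S ((z, a, b) : X × X × X) = (z, a, b) := by
  have hsw : S12 S ((z, a, b) : X × X × X) = (g z a, f a z, b) := by simp [S12, hS]
  rw [hsw] at h1 h2 ⊢
  have hfz : S (f a z, b) = (f a z, b) := congrArg Prod.snd h2
  have h1' : g z a = z := h1
  have hSza : S (z, a) = (z, f a z) := by rw [hS, h1']
  have h3 : S (z, f a z) = (z, a) := by rw [← hSza]; exact hinv (z, a)
  have h4 : f (f a z) z = a := by
    have := congrArg Prod.snd h3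
    rwa [hS] at this
  have e1 : f b (f a z) = z := (hC a b hab).2 z
  have e2 : f b a = z := by
    have := (hC (f a z) b hfz).2 z
    rwa [h4] at this
  have haz : a = f a z := (hf b).1 (by rw [e2, e1])
  rw [← haz, h1']

end Central

end Stmt14Aux

/-- under Property (C), if `xy` is a frozen word then for every `z ∈ X` there is
a unique frozen pair `(x′,y′)` with `xyz = z x′ y′` in the structure monoid `M(X,S)`. -/
theorem stmt_14 {X : Type*} [Fintype X]
    (S : X × X → X × X) (g f : X → X → X)
    (hS : ∀ x y : X, S (x, y) = (g x y, f y x))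
    (hg : ∀ x : X, Function.Bijective (g x))
    (hf : ∀ x : X, Function.Bijective (f x))
    (hinv : ∀ p : X × X, S (S p) = p)
    (hbr : Braided S)
    (hC : PropertyC S g f)
    (x y : X) (hxy : S (x, y) = (x, y)) :
    ∀ z : X, ∃! p : X × X, S p = p ∧
      PresentedMonoid.mk (structRel g f) (FreeMonoid.ofList [x, y, z])
        = PresentedMonoid.mk (structRel g f) (FreeMonoid.ofList [z, p.1, p.2]) := by
  intro z
  classical
  have hCxy := hC x y hxy
  set a := f (g y z) x with ha
  set b := f z y with hb
  -- orbit computations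
  have hw0s : S12 S ((x, y, z) : X × X × X) = (x, y, z) := by simp [S12, hxy]
  have htw0 : S23 S ((x, y, z) : X × X × X) = (x, g y z, f z y) := by simp [S23, hS]
  have hstw0 : S12 S (S23 S ((x, y, z) : X × X × X)) = (z, a, b) := by
    rw [htw0]; simp [S12, hS, hCxy.1 z, ha, hb]
  -- frozenness of (a, b)
  have hq : S23 S ((z, a, b) : X × X × X) = (z, a, b) := by
    have h1 : S23 S (S12 S (S23 S ((x, y, z) : X × X × X)))
        = S12 S (S23 S (S12 S ((x, y, z) : X × X × X))) :=
      (Stmt14Aux.braid_pt hbr _).symm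
    rw [hstw0, hw0s, hstw0] at h1
    exact h1
  have hab : S (a, b) = (a, b) := congrArg Prod.snd hq
  -- equality in the presented monoid
  have hofl : FreeMonoid.ofList [x, y, z]
      = FreeMonoid.of x * (FreeMonoid.of y * FreeMonoid.of z) := rfl
  have hofl2 : FreeMonoid.ofList [z, a, b]
      = FreeMonoid.of z * (FreeMonoid.of a * FreeMonoid.of b) := rfl
  set c := conGen (structRel g f) with hc
  have crel : c (FreeMonoid.ofList [x, y, z]) (FreeMonoid.ofList [z, a, b]) := by
    have step1 : c (FreeMonoid.of y * FreeMonoid.of z)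
        (FreeMonoid.of (g y z) * FreeMonoid.of (f z y)) :=
      ConGen.Rel.of _ _ ⟨y, z, rfl, rfl⟩
    have step2 : c (FreeMonoid.of x * FreeMonoid.of (g y z))
        (FreeMonoid.of (g x (g y z)) * FreeMonoid.of (f (g y z) x)) :=
      ConGen.Rel.of _ _ ⟨x, g y z, rfl, rfl⟩
    have s1 : c (FreeMonoid.ofList [x, y, z])
        (FreeMonoid.of x * (FreeMonoid.of (g y z) * FreeMonoid.of (f z y))) := by
      rw [hofl]
      exact c.mul (c.refl _) step1
    have s2 : c (FreeMonoid.of x * (FreeMonoid.of (g y z) * FreeMonoid.of (f z y)))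
        (FreeMonoid.ofList [z, a, b]) := by
      rw [hofl2, ← mul_assoc, ← mul_assoc]
      have := c.mul step2 (c.refl (FreeMonoid.of (f z y)))
      rw [hCxy.1 z] at this
      exact this
    exact c.trans s1 s2
  have hmkeq : PresentedMonoid.mk (structRel g f) (FreeMonoid.ofList [x, y, z])
      = PresentedMonoid.mk (structRel g f) (FreeMonoid.ofList [z, a, b]) :=
    Quot.sound crel
  refine ⟨(a, b), ⟨hab, hmkeq⟩, ?_⟩
  -- uniqueness
  rintro ⟨p1, p2⟩ ⟨hpfr, hpeq⟩
  have hmk2 : PresentedMonoid.mk (structRel g f) (FreeMonoid.ofList [z, a, b])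
      = PresentedMonoid.mk (structRel g f) (FreeMonoid.ofList [z, p1, p2]) :=
    hmkeq.symm.trans hpeq
  have hcr : c (FreeMonoid.ofList [z, a, b]) (FreeMonoid.ofList [z, p1, p2]) :=
    Quotient.exact' hmk2
  have hstep : Relation.EqvGen (Stmt14Aux.step g f)
      (FreeMonoid.ofList [z, a, b]) (FreeMonoid.ofList [z, p1, p2]) :=
    Stmt14Aux.conGen_le_myCon g f hcr
  obtain ⟨t', ht', horb⟩ := (Stmt14Aux.eqv_enc hS hstep).1 (z, a, b) rfl
  have ht'' : t' = (z, p1, p2) := Stmt14Aux.enc_inj ht'.symm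
  subst ht''
  have hinA : Stmt14Aux.inA S (z, a, b) (z, p1, p2) :=
    Stmt14Aux.orbit_inA hinv hbr horb
  -- q is fixed by S23
  have htq : S23 S ((z, p1, p2) : X × X × X) = (z, p1, p2) := by
    simp only [S23, hpfr]
  -- resolve the orbit cases
  have key : ∀ q : X × X × X, q = S12 S ((z, a, b) : X × X × X) → q.1 = z →
      S23 S q = q → q = (z, a, b) := by
    rintro q rfl h1 h2
    exact Stmt14Aux.central hS hf hinv hC hab h1 h2
  have hfin : ((z, p1, p2) : X × X × X) = (z, a, b) := by
    rcases hinA with h | h | h | h | h | h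
    · exact h
    · exact key _ h rfl htq
    · rwa [hq] at h
    · rw [hq] at h
      exact key _ h rfl htq
    · have := congrArg (S23 S) h
      rw [htq, Stmt14Aux.t_invol hinv] at this
      exact key _ this rfl htq
    · rw [Stmt14Aux.braid_pt hbr, hq] at h
      have := congrArg (S23 S) h
      rw [htq, Stmt14Aux.t_invol hinv] at this
      exact key _ this rfl htq
  have : p1 = a ∧ p2 = b := by
    have h1 := congrArg (fun q : X × X × X => q.2.1) hfin
    have h2 := congrArg (fun q : X × X × X => q.2.2) hfin
    exact ⟨h1, h2⟩
  simp [this.1, this.2]
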